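/- (Uniform comparability of the Prüfer radius.) Let b > 0 and H(x) = diag(1/2 + g(x), 1/2 - g(x)) with g : [0,b] → ℝ integrable, |g| ≤ 1/2 a.e. Suppose there exist [a,c] ⊂ (0,b] and δ > 0 such that g restricted to [a,c] is absolutely continuous with integrable derivative and |g(x)| ≤ 1/2 - δ on [a,c]. Then there exists C ≥ 1, independent of λ, such that for every λ ∈ ℝ and every x ∈ [a,c], C⁻¹·‖u(λ,a)‖ ≤ ‖u(λ,x)‖ ≤ C·‖u(λ,a)‖, where ‖·‖ is the Euclidean norm on ℝ² and u(λ,·) is the solution of the canonical system. -/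

import Mathlib

open MeasureTheory Matrix Set

noncomputable section

/-- The symplectic matrix 𝒥 = [[0,-1],[1,0]] over ℝ. -/
def J2 : Matrix (Fin 2) (Fin 2) ℝ := !![0, -1; 1, 0]

/-- The symplectic matrix 𝒥 = [[0,-1],[1,0]] over ℂ. -/
def J2C : Matrix (Fin 2) (Fin 2) ℂ := !![0, -1; 1, 0]

/-- Complexification of a real 2×2 matrix. -/
def cmat (M : Matrix (Fin 2) (Fin 2) ℝ) : Matrix (Fin 2) (Fin 2) ℂ :=
  M.map Complex.ofReal

lemma core_fubini (f₁ f₂ : ℝ → ℝ) (a x : ℝ)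
    (h₁ : IntegrableOn f₁ (Ioc a x)) (h₂ : IntegrableOn f₂ (Ioc a x)) :
    IntegrableOn (fun s => f₁ s * (∫ t in Ioc a s, f₂ t)) (Ioc a x) ∧
    IntegrableOn (fun s => (∫ t in Ioc a s, f₁ t) * f₂ s) (Ioc a x) ∧
    (∫ s in Ioc a x, f₁ s) * (∫ s in Ioc a x, f₂ s)
      = ∫ s in Ioc a x, (f₁ s * (∫ t in Ioc a s, f₂ t) + (∫ t in Ioc a s, f₁ t) * f₂ s) := by
  set μ := volume.restrict (Ioc a x) with hμ
  set K : ℝ × ℝ → ℝ := fun p => f₁ p.1 * f₂ p.2 with hK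
  have hKint : Integrable K (μ.prod μ) := h₁.mul_prod h₂
  have hT : MeasurableSet {p : ℝ × ℝ | p.2 ≤ p.1} :=
    (isClosed_le continuous_snd continuous_fst).measurableSet
  have hT' : MeasurableSet {p : ℝ × ℝ | p.1 ≤ p.2} :=
    (isClosed_le continuous_fst continuous_snd).measurableSet
  set K₁ := ({p : ℝ × ℝ | p.2 ≤ p.1}).indicator K with hK₁
  set K₂ := ({p : ℝ × ℝ | p.1 ≤ p.2}).indicator K with hK₂
  have hK₁int : Integrable K₁ (μ.prod μ) := hKint.indicator hT
  have hK₂int : Integrable K₂ (μ.prod μ) := hKint.indicator hT'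
  -- the diagonal is null
  have hdiag : (μ.prod μ) {p : ℝ × ℝ | p.1 = p.2} = 0 := by
    have hD : MeasurableSet {p : ℝ × ℝ | p.1 = p.2} :=
      (isClosed_eq continuous_fst continuous_snd).measurableSet
    rw [Measure.prod_apply hD]
    have : ∀ s : ℝ, μ (Prod.mk s ⁻¹' {p : ℝ × ℝ | p.1 = p.2}) = 0 := by
      intro s
      have : (Prod.mk s ⁻¹' {p : ℝ × ℝ | p.1 = p.2}) = {s} := by
        ext t; simp [eq_comm]
      rw [this]
      exact le_antisymm (le_trans (Measure.restrict_le_self _) (by simp)) bot_le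
    simp [this]
  -- K₁ + K₂ = K a.e.
  have hae : (fun p => K₁ p + K₂ p) =ᵐ[μ.prod μ] K := by
    have : {p : ℝ × ℝ | ¬ (K₁ p + K₂ p = K p)} ⊆ {p : ℝ × ℝ | p.1 = p.2} := by
      intro p hp
      by_contra hne
      apply hp
      rcases lt_or_gt_of_ne hne with h | h
      · simp only [hK₁, hK₂, Set.indicator_apply, Set.mem_setOf_eq]
        rw [if_neg (not_le.mpr h), if_pos h.le]
        ring
      · simp only [hK₁, hK₂, Set.indicator_apply, Set.mem_setOf_eq]
        rw [if_pos h.le, if_neg (not_le.mpr h)]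
        ring
    exact measure_mono_null this hdiag
  have key : ∫ p, K₁ p ∂(μ.prod μ) + ∫ p, K₂ p ∂(μ.prod μ)
      = (∫ s in Ioc a x, f₁ s) * (∫ s in Ioc a x, f₂ s) := by
    rw [← integral_add hK₁int hK₂int, integral_congr_ae hae, hK]
    exact integral_prod_mul f₁ f₂
  have slice1 : ∀ s ∈ Ioc a x, (∫ t, K₁ (s, t) ∂μ) = f₁ s * ∫ t in Ioc a s, f₂ t := by
    intro s hs
    have h1 : (fun t => K₁ (s, t)) = (Iic s).indicator (fun t => f₁ s * f₂ t) := by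
      ext t
      simp only [hK₁, hK, Set.indicator_apply, Set.mem_setOf_eq, Set.mem_Iic]
    rw [h1, integral_indicator measurableSet_Iic, hμ,
      Measure.restrict_restrict measurableSet_Iic]
    have h2 : Iic s ∩ Ioc a x = Ioc a s := Iic_inter_Ioc_of_le hs.2
    rw [h2, integral_const_mul]
  have slice2 : ∀ t ∈ Ioc a x, (∫ s, K₂ (s, t) ∂μ) = (∫ s in Ioc a t, f₁ s) * f₂ t := by
    intro t ht
    have h1 : (fun s => K₂ (s, t)) = (Iic t).indicator (fun s => f₁ s * f₂ t) := by
      ext s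
      simp only [hK₂, hK, Set.indicator_apply, Set.mem_setOf_eq, Set.mem_Iic]
    rw [h1, integral_indicator measurableSet_Iic, hμ,
      Measure.restrict_restrict measurableSet_Iic]
    have h2 : Iic t ∩ Ioc a x = Ioc a t := Iic_inter_Ioc_of_le ht.2
    rw [h2, integral_mul_const]
  have hI1 : ∫ p, K₁ p ∂(μ.prod μ) = ∫ s in Ioc a x, f₁ s * ∫ t in Ioc a s, f₂ t := by
    rw [integral_prod _ hK₁int]
    refine integral_congr_ae ?_
    filter_upwards [ae_restrict_mem measurableSet_Ioc] with s hs
    exact slice1 s hs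
  have hI2 : ∫ p, K₂ p ∂(μ.prod μ) = ∫ t in Ioc a x, (∫ s in Ioc a t, f₁ s) * f₂ t := by
    rw [integral_prod_symm _ hK₂int]
    refine integral_congr_ae ?_
    filter_upwards [ae_restrict_mem measurableSet_Ioc] with t ht
    exact slice2 t ht
  have int1 : Integrable (fun s => f₁ s * ∫ t in Ioc a s, f₂ t) μ := by
    refine hK₁int.integral_prod_left.congr ?_
    filter_upwards [ae_restrict_mem measurableSet_Ioc] with s hs
    exact slice1 s hs
  have int2 : Integrable (fun t => (∫ s in Ioc a t, f₁ s) * f₂ t) μ := by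
    refine hK₂int.integral_prod_right.congr ?_
    filter_upwards [ae_restrict_mem measurableSet_Ioc] with t ht
    exact slice2 t ht
  refine ⟨int1, int2, ?_⟩
  rw [← key, hI1, hI2, ← integral_add int1 int2]

lemma prodRule {a c : ℝ} {f₁ f₂ F₁ F₂ : ℝ → ℝ}
    (h₁ : IntegrableOn f₁ (Icc a c)) (h₂ : IntegrableOn f₂ (Icc a c))
    (hF₁ : ∀ x ∈ Icc a c, F₁ x = F₁ a + ∫ s in a..x, f₁ s)
    (hF₂ : ∀ x ∈ Icc a c, F₂ x = F₂ a + ∫ s in a..x, f₂ s) :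
    ∀ x ∈ Icc a c, F₁ x * F₂ x
      = F₁ a * F₂ a + ∫ s in a..x, (f₁ s * F₂ s + F₁ s * f₂ s) := by
  rintro x ⟨hax, hxc⟩
  have h₁' : IntegrableOn f₁ (Ioc a x) :=
    h₁.mono_set ((Ioc_subset_Icc_self).trans (Icc_subset_Icc le_rfl hxc))
  have h₂' : IntegrableOn f₂ (Ioc a x) :=
    h₂.mono_set ((Ioc_subset_Icc_self).trans (Icc_subset_Icc le_rfl hxc))
  obtain ⟨int1, int2, core⟩ := core_fubini f₁ f₂ a x h₁' h₂'
  have hrw : ∀ s ∈ Ioc a x, f₁ s * F₂ s + F₁ s * f₂ s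
      = (F₂ a * f₁ s + F₁ a * f₂ s)
        + (f₁ s * (∫ t in Ioc a s, f₂ t) + (∫ t in Ioc a s, f₁ t) * f₂ s) := by
    rintro s ⟨has, hsx⟩
    have hs : s ∈ Icc a c := ⟨has.le, hsx.trans hxc⟩
    have e₁ : F₁ s = F₁ a + ∫ t in Ioc a s, f₁ t := by
      rw [hF₁ s hs, intervalIntegral.integral_of_le has.le]
    have e₂ : F₂ s = F₂ a + ∫ t in Ioc a s, f₂ t := by
      rw [hF₂ s hs, intervalIntegral.integral_of_le has.le]
    rw [e₁, e₂]; ring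
  have hint1 : IntegrableOn (fun s => F₂ a * f₁ s + F₁ a * f₂ s) (Ioc a x) :=
    (h₁'.const_mul _).add (h₂'.const_mul _)
  calc F₁ x * F₂ x
      = (F₁ a + ∫ s in Ioc a x, f₁ s) * (F₂ a + ∫ s in Ioc a x, f₂ s) := by
        rw [hF₁ x ⟨hax, hxc⟩, hF₂ x ⟨hax, hxc⟩]
        simp only [intervalIntegral.integral_of_le hax]
    _ = F₁ a * F₂ a + ((F₂ a * ∫ s in Ioc a x, f₁ s) + F₁ a * ∫ s in Ioc a x, f₂ s)
          + (∫ s in Ioc a x, f₁ s) * (∫ s in Ioc a x, f₂ s) := by ring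
    _ = F₁ a * F₂ a + ∫ s in a..x, (f₁ s * F₂ s + F₁ s * f₂ s) := by
        have int12 : IntegrableOn
            (fun s => f₁ s * (∫ t in Ioc a s, f₂ t) + (∫ t in Ioc a s, f₁ t) * f₂ s)
            (Ioc a x) := int1.add int2
        rw [intervalIntegral.integral_of_le hax, core,
          setIntegral_congr_fun measurableSet_Ioc (fun s hs => hrw s hs),
          integral_add hint1 int12, integral_add (h₁'.const_mul _) (h₂'.const_mul _),
          integral_const_mul, integral_const_mul]
        ring

/-- interval integrability from integrability on an ambient interval -/
lemma II_of_integrableOn {E : Type*} [NormedAddCommGroup E] {f : ℝ → E} {l r x y : ℝ}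
    (hf : IntegrableOn f (Icc l r)) (hx : x ∈ Icc l r) (hy : y ∈ Icc l r) :
    IntervalIntegrable f volume x y :=
  (hf.mono_set (uIcc_subset_Icc hx hy)).intervalIntegrable

/-- bounded a.e.-measurable times integrable is integrable, both orders -/
lemma int_bddMul {S : Set ℝ} (hS : MeasurableSet S) {f γ : ℝ → ℝ} {M : ℝ}
    (hf : IntegrableOn f S) (hγ : AEStronglyMeasurable γ (volume.restrict S))
    (hb : ∀ x ∈ S, |γ x| ≤ M) :
    IntegrableOn (fun s => γ s * f s) S ∧ IntegrableOn (fun s => f s * γ s) S := by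
  have h1 : IntegrableOn (fun s => γ s * f s) S := by
    refine hf.bdd_mul (c := M) hγ ?_
    filter_upwards [ae_restrict_mem hS] with s hs
    simpa [Real.norm_eq_abs] using hb s hs
  refine ⟨h1, ?_⟩
  have : (fun s => f s * γ s) = fun s => γ s * f s := by funext s; ring
  rw [this]; exact h1

set_option maxHeartbeats 2000000 in
theorem pruefer_radius_comparable
    (b : ℝ) (hb : 0 < b)
    (g : ℝ → ℝ)
    (hgint : IntegrableOn g (Icc 0 b))
    (hgbd : ∀ᵐ x ∂volume, x ∈ Icc (0:ℝ) b → |g x| ≤ 1/2)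
    (H : ℝ → Matrix (Fin 2) (Fin 2) ℝ)
    (hH : ∀ x, H x = !![1/2 + g x, 0; 0, 1/2 - g x])
    (a c δ : ℝ) (ha : 0 < a) (hac : a < c) (hcb : c ≤ b) (hδ : 0 < δ)
    (gd : ℝ → ℝ) (hgdint : IntegrableOn gd (Icc a c))
    (hgAC : ∀ x ∈ Icc a c, g x = g a + ∫ s in a..x, gd s)
    (hgbd2 : ∀ x ∈ Icc a c, |g x| ≤ 1/2 - δ)
    (u : ℝ → ℝ → Fin 2 → ℝ)
    (hucont : ∀ lam, ContinuousOn (u lam) (Icc 0 b))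
    (hueq : ∀ lam : ℝ, ∀ x ∈ Icc (0:ℝ) b,
      u lam x = ![1, 0] + lam • ∫ s in (0:ℝ)..x, (J2 * H s) *ᵥ u lam s) :
    ∃ C : ℝ, 1 ≤ C ∧ ∀ lam : ℝ, ∀ x ∈ Icc a c,
      C⁻¹ * Real.sqrt ((u lam a 0)^2 + (u lam a 1)^2)
          ≤ Real.sqrt ((u lam x 0)^2 + (u lam x 1)^2) ∧
      Real.sqrt ((u lam x 0)^2 + (u lam x 1)^2)
          ≤ C * Real.sqrt ((u lam a 0)^2 + (u lam a 1)^2) := by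
  have hab : a ≤ c := hac.le
  have haS : a ∈ Icc a c := ⟨le_rfl, hab⟩
  have hcS : c ∈ Icc a c := ⟨hab, le_rfl⟩
  have hsubS : Icc a c ⊆ Icc 0 b := Icc_subset_Icc ha.le hcb
  have hδhalf : 0 ≤ 1/2 - δ := le_trans (abs_nonneg _) (hgbd2 a haS)
  have hpq : ∀ y ∈ Icc a c, δ ≤ 1/2 + g y ∧ 1/2 + g y ≤ 1 ∧ δ ≤ 1/2 - g y ∧ 1/2 - g y ≤ 1 := by
    intro y hy
    have h := abs_le.mp (hgbd2 y hy)
    exact ⟨by linarith [h.1], by linarith [h.2], by linarith [h.2], by linarith [h.1]⟩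
  -- the control function k and its primitive Φ (independent of lam)
  set k : ℝ → ℝ := fun s => δ⁻¹ * |gd s| with hk
  have hkS : IntegrableOn k (Icc a c) := hgdint.abs.const_mul δ⁻¹
  have hk0 : ∀ s, 0 ≤ k s := fun s => mul_nonneg (inv_nonneg.mpr hδ.le) (abs_nonneg _)
  set Φ : ℝ → ℝ := fun y => ∫ s in a..y, k s with hΦdef
  have hkII : ∀ x₀ ∈ Icc a c, ∀ y ∈ Icc a c, IntervalIntegrable k volume x₀ y :=
    fun x₀ h0 y hy => II_of_integrableOn hkS h0 hy
  have hΦcont : ContinuousOn Φ (Icc a c) := by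
    have h := intervalIntegral.continuousOn_primitive (f := k) (a := a) (b := c) (μ := volume) hkS
    exact h.congr fun y hy => intervalIntegral.integral_of_le hy.1
  have hΦa : Φ a = 0 := intervalIntegral.integral_same
  have hΦdiff : ∀ x₀ ∈ Icc a c, ∀ y ∈ Icc a c, (∫ s in x₀..y, k s) = Φ y - Φ x₀ := by
    intro x₀ h0 y hy
    have h := intervalIntegral.integral_add_adjacent_intervals
      (hkII a haS x₀ h0) (hkII x₀ h0 y hy)
    simp only [hΦdef]
    linarith [h]
  have hΦmono : ∀ x₀ ∈ Icc a c, ∀ y ∈ Icc a c, x₀ ≤ y → Φ x₀ ≤ Φ y := by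
    intro x₀ h0 y hy hxy
    have h := hΦdiff x₀ h0 y hy
    have h2 : 0 ≤ ∫ s in x₀..y, k s :=
      intervalIntegral.integral_nonneg hxy (fun s _ => hk0 s)
    linarith
  have hΦ0 : ∀ y ∈ Icc a c, 0 ≤ Φ y := fun y hy => hΦa ▸ hΦmono a haS y hy hy.1
  set N : ℕ := ⌈(4:ℝ) * Φ c⌉₊ with hN
  have hΦcN : ∀ x ∈ Icc a c, Φ x ≤ N / 4 := by
    intro x hx
    have h1 : Φ x ≤ Φ c := hΦmono x hx c hcS hx.2
    have h2 : (4:ℝ) * Φ c ≤ N := Nat.le_ceil _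
    linarith
  set β : ℝ := max (((3:ℝ)/2)^(N+1) / δ) 1 with hβdef
  have hβ1 : 1 ≤ β := le_max_right _ _
  have hβ0 : 0 ≤ β := le_trans zero_le_one hβ1
  have hC1 : 1 ≤ Real.sqrt β := by
    rw [show (1:ℝ) = Real.sqrt 1 by simp]
    exact Real.sqrt_le_sqrt hβ1
  have hCpos : 0 < Real.sqrt β := lt_of_lt_of_le one_pos hC1
  refine ⟨Real.sqrt β, hC1, ?_⟩
  intro lam
  ------------------------------------------------------------------
  -- Part 1: integral representation of the components of u lam
  ------------------------------------------------------------------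
  obtain ⟨M, hM⟩ : ∃ M, ∀ x ∈ Icc (0:ℝ) b, ‖u lam x‖ ≤ M :=
    isCompact_Icc.exists_bound_of_continuousOn (hucont lam)
  have h0b : (0:ℝ) ∈ Icc (0:ℝ) b := ⟨le_rfl, hb.le⟩
  have hM0 : 0 ≤ M := le_trans (norm_nonneg _) (hM 0 h0b)
  have hMi : ∀ (i : Fin 2), ∀ x ∈ Icc (0:ℝ) b, |u lam x i| ≤ M := by
    intro i x hx
    calc |u lam x i| = ‖u lam x i‖ := (Real.norm_eq_abs _).symm
      _ ≤ ‖u lam x‖ := norm_le_pi_norm (u lam x) i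
      _ ≤ M := hM x hx
  have hw0c : ContinuousOn (fun s => u lam s 0) (Icc 0 b) :=
    (continuous_apply (0 : Fin 2)).comp_continuousOn (hucont lam)
  have hw1c : ContinuousOn (fun s => u lam s 1) (Icc 0 b) :=
    (continuous_apply (1 : Fin 2)).comp_continuousOn (hucont lam)
  set d0 : ℝ → ℝ := fun s => -((1/2 - g s) * u lam s 1) with hd0def
  set d1 : ℝ → ℝ := fun s => (1/2 + g s) * u lam s 0 with hd1def
  have hVform : ∀ s, (J2 * H s) *ᵥ u lam s = ![d0 s, d1 s] := by
    intro s; funext i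
    fin_cases i <;>
      simp [J2, hH s, Matrix.mulVec, dotProduct, Matrix.vecHead, Matrix.vecTail, Fin.sum_univ_two, Matrix.mul_apply,
        hd0def, hd1def]
  have hconst : ∀ r : ℝ, IntegrableOn (fun _ : ℝ => r) (Icc 0 b) :=
    fun r => integrableOn_const measure_Icc_lt_top.ne
  have hu0m : AEStronglyMeasurable (fun s => u lam s 0) (volume.restrict (Icc 0 b)) :=
    hw0c.aestronglyMeasurable measurableSet_Icc
  have hu1m : AEStronglyMeasurable (fun s => u lam s 1) (volume.restrict (Icc 0 b)) :=
    hw1c.aestronglyMeasurable measurableSet_Icc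
  have hqe : IntegrableOn (fun s => 1/2 - g s) (Icc 0 b) := (hconst _).sub hgint
  have hpe : IntegrableOn (fun s => 1/2 + g s) (Icc 0 b) := (hconst _).add hgint
  have hd0int : IntegrableOn d0 (Icc 0 b) := by
    have h := (int_bddMul measurableSet_Icc hqe hu1m (hMi 1)).1
    have e : d0 = fun s => -(u lam s 1 * (1/2 - g s)) := by
      funext s; simp only [hd0def]; ring
    rw [e]
    exact h.neg
  have hd1int : IntegrableOn d1 (Icc 0 b) := by
    have h := (int_bddMul measurableSet_Icc hpe hu0m (hMi 0)).1
    have e : d1 = fun s => u lam s 0 * (1/2 + g s) := by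
      funext s; simp only [hd1def]; ring
    rw [e]
    exact h.congr (by filter_upwards with s; ring)
  set V : ℝ → Fin 2 → ℝ := fun s => (J2 * H s) *ᵥ u lam s with hVdef
  have hVsm : AEStronglyMeasurable V (volume.restrict (Icc 0 b)) := by
    obtain ⟨d0', hd0'm, hd0'ae⟩ := hd0int.1
    obtain ⟨d1', hd1'm, hd1'ae⟩ := hd1int.1
    refine ⟨fun s => ![d0' s, d1' s], ?_, ?_⟩
    · apply Measurable.stronglyMeasurable
      rw [measurable_pi_iff]
      intro i; fin_cases i
      · simpa using hd0'm.measurable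
      · simpa using hd1'm.measurable
    · filter_upwards [hd0'ae, hd1'ae] with s h0 h1
      rw [hVdef]
      simp only [hVform s, h0, h1]
  have hVint : IntegrableOn V (Icc 0 b) := by
    refine Integrable.mono' (hd0int.abs.add hd1int.abs) hVsm ?_
    filter_upwards with s
    rw [hVdef]
    simp only [hVform s]
    rw [Pi.add_apply]
    rw [pi_norm_le_iff_of_nonneg (by positivity)]
    intro i; fin_cases i <;>
      simp [Real.norm_eq_abs] <;>
      linarith [abs_nonneg (d0 s), abs_nonneg (d1 s)]
  have hVII : ∀ x ∈ Icc (0:ℝ) b, ∀ y ∈ Icc (0:ℝ) b, IntervalIntegrable V volume x y :=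
    fun x hx y hy => II_of_integrableOn hVint hx hy
  have hV0 : ∀ s, V s 0 = d0 s := by
    intro s; rw [hVdef]; simp only [hVform s]; simp
  have hV1 : ∀ s, V s 1 = d1 s := by
    intro s; rw [hVdef]; simp only [hVform s]; simp
  have hcomp : ∀ i : Fin 2, ∀ x ∈ Icc (0:ℝ) b,
      u lam x i = (![1, 0] : Fin 2 → ℝ) i + lam * ∫ s in (0:ℝ)..x, V s i := by
    intro i x hx
    have h := congrFun (hueq lam x hx) i
    have hproj : (∫ s in (0:ℝ)..x, V s) i = ∫ s in (0:ℝ)..x, V s i := by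
      have h2 := (ContinuousLinearMap.proj (R := ℝ) (φ := fun _ : Fin 2 => ℝ)
        i).intervalIntegral_comp_comm (hVII 0 h0b x hx)
      simpa using h2.symm
    rw [h]
    change ((![1, 0] : Fin 2 → ℝ) + lam • ∫ s in (0:ℝ)..x, V s) i = _
    rw [Pi.add_apply, Pi.smul_apply, smul_eq_mul, hproj]
  -- integral representation with base point a, for components
  set e0 : ℝ → ℝ := fun s => lam * d0 s with he0def
  set e1 : ℝ → ℝ := fun s => lam * d1 s with he1def
  have hd0IIa : ∀ x y, x ∈ Icc (0:ℝ) b → y ∈ Icc (0:ℝ) b → IntervalIntegrable d0 volume x y :=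
    fun x y hx hy => II_of_integrableOn hd0int hx hy
  have hd1IIa : ∀ x y, x ∈ Icc (0:ℝ) b → y ∈ Icc (0:ℝ) b → IntervalIntegrable d1 volume x y :=
    fun x y hx hy => II_of_integrableOn hd1int hx hy
  have haB : a ∈ Icc (0:ℝ) b := hsubS haS
  have hrep : ∀ x ∈ Icc a c,
      (u lam x 0 = u lam a 0 + ∫ s in a..x, e0 s) ∧
      (u lam x 1 = u lam a 1 + ∫ s in a..x, e1 s) := by
    intro x hx
    have hxB : x ∈ Icc (0:ℝ) b := hsubS hx
    constructor
    · have h1 := hcomp 0 x hxB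
      have h2 := hcomp 0 a haB
      have hcongr0 : ∀ z w (hz : z ∈ Icc (0:ℝ) b) (hw : w ∈ Icc (0:ℝ) b),
          (∫ s in z..w, V s 0) = ∫ s in z..w, d0 s := by
        intro z w hz hw; simp only [hV0]
      have hadj : (∫ s in (0:ℝ)..a, d0 s) + (∫ s in a..x, d0 s) = ∫ s in (0:ℝ)..x, d0 s :=
        intervalIntegral.integral_add_adjacent_intervals (hd0IIa 0 a h0b haB)
          (hd0IIa a x haB hxB)
      have he : (∫ s in a..x, e0 s) = lam * ∫ s in a..x, d0 s := by
        simp only [he0def]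
        exact intervalIntegral.integral_const_mul lam d0
      rw [h1, h2, hcongr0 0 x h0b hxB, hcongr0 0 a h0b haB, he, ← hadj]
      ring
    · have h1 := hcomp 1 x hxB
      have h2 := hcomp 1 a haB
      have hcongr1 : ∀ z w (hz : z ∈ Icc (0:ℝ) b) (hw : w ∈ Icc (0:ℝ) b),
          (∫ s in z..w, V s 1) = ∫ s in z..w, d1 s := by
        intro z w hz hw; simp only [hV1]
      have hadj : (∫ s in (0:ℝ)..a, d1 s) + (∫ s in a..x, d1 s) = ∫ s in (0:ℝ)..x, d1 s :=
        intervalIntegral.integral_add_adjacent_intervals (hd1IIa 0 a h0b haB)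
          (hd1IIa a x haB hxB)
      have he : (∫ s in a..x, e1 s) = lam * ∫ s in a..x, d1 s := by
        simp only [he1def]
        exact intervalIntegral.integral_const_mul lam d1
      rw [h1, h2, hcongr1 0 x h0b hxB, hcongr1 0 a h0b haB, he, ← hadj]
      ring
  ------------------------------------------------------------------
  -- Part 2: the energy identity
  ------------------------------------------------------------------
  have hrep0 : ∀ x ∈ Icc a c, u lam x 0 = u lam a 0 + ∫ s in a..x, e0 s :=
    fun x hx => (hrep x hx).1
  have hrep1 : ∀ x ∈ Icc a c, u lam x 1 = u lam a 1 + ∫ s in a..x, e1 s :=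
    fun x hx => (hrep x hx).2
  have he0S : IntegrableOn e0 (Icc a c) := (hd0int.mono_set hsubS).const_mul lam
  have he1S : IntegrableOn e1 (Icc a c) := (hd1int.mono_set hsubS).const_mul lam
  have hu0mS : AEStronglyMeasurable (fun s => u lam s 0) (volume.restrict (Icc a c)) :=
    (hw0c.mono hsubS).aestronglyMeasurable measurableSet_Icc
  have hu1mS : AEStronglyMeasurable (fun s => u lam s 1) (volume.restrict (Icc a c)) :=
    (hw1c.mono hsubS).aestronglyMeasurable measurableSet_Icc
  have hMiS : ∀ i : Fin 2, ∀ x ∈ Icc a c, |u lam x i| ≤ M := fun i x hx => hMi i x (hsubS hx)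
  have sq0 := prodRule (f₁ := e0) (f₂ := e0) (F₁ := fun y => u lam y 0)
    (F₂ := fun y => u lam y 0) he0S he0S hrep0 hrep0
  have sq1 := prodRule (f₁ := e1) (f₂ := e1) (F₁ := fun y => u lam y 1)
    (F₂ := fun y => u lam y 1) he1S he1S hrep1 hrep1
  set f20 : ℝ → ℝ := fun s => e0 s * u lam s 0 + u lam s 0 * e0 s with hf20def
  set f21 : ℝ → ℝ := fun s => e1 s * u lam s 1 + u lam s 1 * e1 s with hf21def
  have hf20S : IntegrableOn f20 (Icc a c) := by
    have h1 := (int_bddMul measurableSet_Icc he0S hu0mS (hMiS 0)).2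
    have h2 := (int_bddMul measurableSet_Icc he0S hu0mS (hMiS 0)).1
    exact h1.add h2
  have hf21S : IntegrableOn f21 (Icc a c) := by
    have h1 := (int_bddMul measurableSet_Icc he1S hu1mS (hMiS 1)).2
    have h2 := (int_bddMul measurableSet_Icc he1S hu1mS (hMiS 1)).1
    exact h1.add h2
  have hprep : ∀ x ∈ Icc a c,
      (fun y => 1/2 + g y) x = (fun y => 1/2 + g y) a + ∫ s in a..x, gd s := by
    intro x hx; simp only; rw [hgAC x hx]; ring
  have hqrep : ∀ x ∈ Icc a c,
      (fun y => 1/2 - g y) x = (fun y => 1/2 - g y) a + ∫ s in a..x, (fun t => -gd t) s := by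
    intro x hx; simp only [intervalIntegral.integral_neg]; rw [hgAC x hx]; ring
  have P := prodRule (f₁ := gd) (f₂ := f20) (F₁ := fun y => 1/2 + g y)
    (F₂ := fun y => u lam y 0 * u lam y 0) hgdint hf20S hprep sq0
  have Q := prodRule (f₁ := fun t => -gd t) (f₂ := f21) (F₁ := fun y => 1/2 - g y)
    (F₂ := fun y => u lam y 1 * u lam y 1) hgdint.neg hf21S hqrep sq1
  set En : ℝ → ℝ := fun y => (1/2 + g y) * (u lam y 0 * u lam y 0)
      + (1/2 - g y) * (u lam y 1 * u lam y 1) with hEndef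
  set ψ : ℝ → ℝ := fun s => (u lam s 0 * u lam s 0 - u lam s 1 * u lam s 1) * gd s with hψdef
  set I₁ : ℝ → ℝ := fun s => gd s * (u lam s 0 * u lam s 0) + (1/2 + g s) * f20 s with hI₁def
  set I₂ : ℝ → ℝ := fun s => -gd s * (u lam s 1 * u lam s 1) + (1/2 - g s) * f21 s with hI₂def
  have hgSm : AEStronglyMeasurable g (volume.restrict (Icc a c)) := (hgint.mono_set hsubS).1
  have hI₁S : IntegrableOn I₁ (Icc a c) := by
    have h1 : IntegrableOn (fun s => gd s * (u lam s 0 * u lam s 0)) (Icc a c) := by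
      have hm : AEStronglyMeasurable (fun s => u lam s 0 * u lam s 0)
          (volume.restrict (Icc a c)) := hu0mS.mul hu0mS
      have hbd : ∀ x ∈ Icc a c, |u lam x 0 * u lam x 0| ≤ M * M := by
        intro x hx; rw [abs_mul]
        exact mul_le_mul (hMiS 0 x hx) (hMiS 0 x hx) (abs_nonneg _) hM0
      exact (int_bddMul measurableSet_Icc hgdint hm hbd).2
    have h2 : IntegrableOn (fun s => (1/2 + g s) * f20 s) (Icc a c) := by
      have hm : AEStronglyMeasurable (fun s => 1/2 + g s) (volume.restrict (Icc a c)) :=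
        aestronglyMeasurable_const.add hgSm
      have hbd : ∀ x ∈ Icc a c, |1/2 + g x| ≤ 1 := by
        intro x hx
        have h := hpq x hx
        rw [abs_le]; constructor <;> linarith [h.1, h.2.1, hδ]
      exact (int_bddMul measurableSet_Icc hf20S hm hbd).1
    exact h1.add h2
  have hI₂S : IntegrableOn I₂ (Icc a c) := by
    have h1 : IntegrableOn (fun s => -gd s * (u lam s 1 * u lam s 1)) (Icc a c) := by
      have hm : AEStronglyMeasurable (fun s => u lam s 1 * u lam s 1)
          (volume.restrict (Icc a c)) := hu1mS.mul hu1mS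
      have hbd : ∀ x ∈ Icc a c, |u lam x 1 * u lam x 1| ≤ M * M := by
        intro x hx; rw [abs_mul]
        exact mul_le_mul (hMiS 1 x hx) (hMiS 1 x hx) (abs_nonneg _) hM0
      exact (int_bddMul measurableSet_Icc hgdint.neg hm hbd).2
    have h2 : IntegrableOn (fun s => (1/2 - g s) * f21 s) (Icc a c) := by
      have hm : AEStronglyMeasurable (fun s => 1/2 - g s) (volume.restrict (Icc a c)) :=
        aestronglyMeasurable_const.sub hgSm
      have hbd : ∀ x ∈ Icc a c, |1/2 - g x| ≤ 1 := by
        intro x hx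
        have h := hpq x hx
        rw [abs_le]; constructor <;> linarith [h.2.2.1, h.2.2.2, hδ]
      exact (int_bddMul measurableSet_Icc hf21S hm hbd).1
    exact h1.add h2
  have hψS : IntegrableOn ψ (Icc a c) := by
    have hm : AEStronglyMeasurable (fun s => u lam s 0 * u lam s 0 - u lam s 1 * u lam s 1)
        (volume.restrict (Icc a c)) := (hu0mS.mul hu0mS).sub (hu1mS.mul hu1mS)
    have hbd : ∀ x ∈ Icc a c, |u lam x 0 * u lam x 0 - u lam x 1 * u lam x 1| ≤ M * M + M * M := by
      intro x hx
      refine le_trans (abs_sub _ _) ?_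
      have h0 : |u lam x 0 * u lam x 0| ≤ M * M := by
        rw [abs_mul]; exact mul_le_mul (hMiS 0 x hx) (hMiS 0 x hx) (abs_nonneg _) hM0
      have h1 : |u lam x 1 * u lam x 1| ≤ M * M := by
        rw [abs_mul]; exact mul_le_mul (hMiS 1 x hx) (hMiS 1 x hx) (abs_nonneg _) hM0
      linarith
    exact (int_bddMul measurableSet_Icc hgdint hm hbd).1
  have hEeq : ∀ x ∈ Icc a c, En x = En a + ∫ s in a..x, ψ s := by
    intro x hx
    have hP := P x hx
    have hQ := Q x hx
    have hII₁ : IntervalIntegrable I₁ volume a x := II_of_integrableOn hI₁S haS hx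
    have hII₂ : IntervalIntegrable I₂ volume a x := II_of_integrableOn hI₂S haS hx
    have hadd : (∫ s in a..x, (I₁ s + I₂ s)) = (∫ s in a..x, I₁ s) + ∫ s in a..x, I₂ s :=
      intervalIntegral.integral_add hII₁ hII₂
    have hcongr : (∫ s in a..x, (I₁ s + I₂ s)) = ∫ s in a..x, ψ s := by
      have he : (fun s => I₁ s + I₂ s) = ψ := by
        funext s
        simp only [hI₁def, hI₂def, hψdef, hf20def, hf21def, he0def, he1def, hd0def, hd1def]
        ring
      rw [he]
    show (1/2 + g x) * (u lam x 0 * u lam x 0) + (1/2 - g x) * (u lam x 1 * u lam x 1)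
      = ((1/2 + g a) * (u lam a 0 * u lam a 0) + (1/2 - g a) * (u lam a 1 * u lam a 1))
        + ∫ s in a..x, ψ s
    rw [← hcongr, hadd]
    linarith [hP, hQ]
  ------------------------------------------------------------------
  -- Part 3: continuity, nonnegativity, and the one-piece estimate
  ------------------------------------------------------------------
  have hgcont : ContinuousOn g (Icc a c) := by
    have hprim := intervalIntegral.continuousOn_primitive (f := gd) (a := a) (b := c)
      (μ := volume) hgdint
    have h2 : ContinuousOn (fun y => g a + ∫ t in Ioc a y, gd t) (Icc a c) :=
      continuousOn_const.add hprim
    exact h2.congr fun y hy => by rw [hgAC y hy, intervalIntegral.integral_of_le hy.1]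
  have hw0S : ContinuousOn (fun s => u lam s 0) (Icc a c) := hw0c.mono hsubS
  have hw1S : ContinuousOn (fun s => u lam s 1) (Icc a c) := hw1c.mono hsubS
  have hEncont : ContinuousOn En (Icc a c) := by
    have : ContinuousOn (fun y => (1/2 + g y) * (u lam y 0 * u lam y 0)
        + (1/2 - g y) * (u lam y 1 * u lam y 1)) (Icc a c) :=
      ((continuousOn_const.add hgcont).mul (hw0S.mul hw0S)).add
        ((continuousOn_const.sub hgcont).mul (hw1S.mul hw1S))
    exact this
  have hEn0 : ∀ y ∈ Icc a c, 0 ≤ En y := by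
    intro y hy
    have h := hpq y hy
    show 0 ≤ (1/2 + g y) * (u lam y 0 * u lam y 0) + (1/2 - g y) * (u lam y 1 * u lam y 1)
    have h1 : 0 ≤ (1/2 + g y) * (u lam y 0 * u lam y 0) :=
      mul_nonneg (by linarith [h.1]) (mul_self_nonneg _)
    have h2 : 0 ≤ (1/2 - g y) * (u lam y 1 * u lam y 1) :=
      mul_nonneg (by linarith [h.2.2.1]) (mul_self_nonneg _)
    linarith
  have hδE : ∀ y ∈ Icc a c,
      δ * (u lam y 0 * u lam y 0 + u lam y 1 * u lam y 1) ≤ En y := by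
    intro y hy
    have h := hpq y hy
    show δ * _ ≤ (1/2 + g y) * (u lam y 0 * u lam y 0) + (1/2 - g y) * (u lam y 1 * u lam y 1)
    nlinarith [mul_self_nonneg (u lam y 0), mul_self_nonneg (u lam y 1), h.1, h.2.2.1]
  have hEup : ∀ y ∈ Icc a c,
      En y ≤ u lam y 0 * u lam y 0 + u lam y 1 * u lam y 1 := by
    intro y hy
    have h := hpq y hy
    show (1/2 + g y) * (u lam y 0 * u lam y 0) + (1/2 - g y) * (u lam y 1 * u lam y 1) ≤ _
    nlinarith [mul_self_nonneg (u lam y 0), mul_self_nonneg (u lam y 1), h.2.1, h.2.2.2]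
  -- the one-piece estimate
  have piece : ∀ x₀ ∈ Icc a c, ∀ x ∈ Icc a c, x₀ ≤ x → (∫ s in x₀..x, k s) ≤ 1/4 →
      (2/3) * En x₀ ≤ En x ∧ En x ≤ (4/3) * En x₀ := by
    intro x₀ h₀ x hx h₀x hsmall
    have hsub2 : Icc x₀ x ⊆ Icc a c := Icc_subset_Icc h₀.1 hx.2
    obtain ⟨z, hz, hzmax⟩ := isCompact_Icc.exists_isMaxOn (nonempty_Icc.mpr h₀x)
      (hEncont.mono hsub2)
    have hzS : z ∈ Icc a c := hsub2 hz
    have hEz0 : 0 ≤ En z := hEn0 z hzS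
    have hdev : ∀ y ∈ Icc x₀ x, |En y - En x₀| ≤ (1/4) * En z := by
      intro y hy
      have hyS : y ∈ Icc a c := hsub2 hy
      have h₀y : x₀ ≤ y := hy.1
      have hψII1 : IntervalIntegrable ψ volume a x₀ := II_of_integrableOn hψS haS h₀
      have hψII2 : IntervalIntegrable ψ volume x₀ y := II_of_integrableOn hψS h₀ hyS
      have hadj := intervalIntegral.integral_add_adjacent_intervals hψII1 hψII2
      have hdiffe : En y - En x₀ = ∫ s in x₀..y, ψ s := by
        rw [hEeq y hyS, hEeq x₀ h₀, ← hadj]; ring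
      rw [hdiffe]
      have hkIIxy : IntervalIntegrable k volume x₀ y := hkII x₀ h₀ y hyS
      calc |∫ s in x₀..y, ψ s| ≤ ∫ s in x₀..y, |ψ s| :=
            intervalIntegral.abs_integral_le_integral_abs h₀y
        _ ≤ ∫ s in x₀..y, k s * En z := by
            refine intervalIntegral.integral_mono_on h₀y hψII2.abs
              (hkIIxy.mul_const (En z)) ?_
            intro s hs
            have hsS : s ∈ Icc a c := hsub2 ⟨hs.1, hs.2.trans hy.2⟩
            have hEsz : En s ≤ En z := hzmax ⟨hs.1, hs.2.trans hy.2⟩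
            have hEs := hδE s hsS
            have habs : |u lam s 0 * u lam s 0 - u lam s 1 * u lam s 1|
                ≤ u lam s 0 * u lam s 0 + u lam s 1 * u lam s 1 := by
              rw [abs_le]
              constructor <;> nlinarith [mul_self_nonneg (u lam s 0), mul_self_nonneg (u lam s 1)]
            have hψabs : |ψ s| ≤ (u lam s 0 * u lam s 0 + u lam s 1 * u lam s 1) * |gd s| := by
              show |(u lam s 0 * u lam s 0 - u lam s 1 * u lam s 1) * gd s| ≤ _
              rw [abs_mul]
              exact mul_le_mul_of_nonneg_right habs (abs_nonneg _)
            have hks : k s = δ⁻¹ * |gd s| := rfl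
            have hδinv : 0 < δ⁻¹ := inv_pos.mpr hδ
            have h2 : (u lam s 0 * u lam s 0 + u lam s 1 * u lam s 1) ≤ δ⁻¹ * En s := by
              calc u lam s 0 * u lam s 0 + u lam s 1 * u lam s 1
                  = δ⁻¹ * (δ * (u lam s 0 * u lam s 0 + u lam s 1 * u lam s 1)) := by
                    field_simp
                _ ≤ δ⁻¹ * En s := mul_le_mul_of_nonneg_left (hδE s hsS) hδinv.le
            calc |ψ s| ≤ (u lam s 0 * u lam s 0 + u lam s 1 * u lam s 1) * |gd s| := hψabs
              _ ≤ (δ⁻¹ * En s) * |gd s| := mul_le_mul_of_nonneg_right h2 (abs_nonneg _)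
              _ = k s * En s := by rw [hks]; ring
              _ ≤ k s * En z := mul_le_mul_of_nonneg_left hEsz (hk0 s)
        _ = (∫ s in x₀..y, k s) * En z := intervalIntegral.integral_mul_const _ _
        _ ≤ (1/4) * En z := by
            refine mul_le_mul_of_nonneg_right ?_ hEz0
            have h1 := hΦdiff x₀ h₀ y hyS
            have h2 := hΦdiff x₀ h₀ x hx
            have h3 := hΦmono y hyS x hx hy.2
            linarith
    have hdz := abs_le.mp (hdev z hz)
    have hdx := abs_le.mp (hdev x ⟨h₀x, le_rfl⟩)
    have hzx : En x ≤ En z := hzmax ⟨h₀x, le_rfl⟩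
    constructor
    · linarith
    · linarith
  ------------------------------------------------------------------
  -- Part 4: iteration along the interval
  ------------------------------------------------------------------
  have main : ∀ n : ℕ, ∀ x ∈ Icc a c, Φ x ≤ n / 4 →
      ((2:ℝ)/3)^(n+1) * En a ≤ En x ∧ En x ≤ ((4:ℝ)/3)^(n+1) * En a := by
    intro n
    induction n with
    | zero =>
      intro x hx hxΦ
      have hsm : (∫ s in a..x, k s) ≤ 1/4 := by
        have := hΦdiff a haS x hx
        rw [hΦa] at this
        simp only [Nat.cast_zero] at hxΦ
        linarith
      have h := piece a haS x hx hx.1 hsm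
      simpa [pow_one] using h
    | succ n ih =>
      intro x hx hxΦ
      have hEa0 : 0 ≤ En a := hEn0 a haS
      by_cases hcase : Φ x ≤ n / 4
      · obtain ⟨hl, hr⟩ := ih x hx hcase
        constructor
        · have hmono : ((2:ℝ)/3)^(n+1+1) * En a ≤ ((2:ℝ)/3)^(n+1) * En a := by
            refine mul_le_mul_of_nonneg_right ?_ hEa0
            exact pow_le_pow_of_le_one (by norm_num) (by norm_num) (by omega)
          linarith
        · have hmono : ((4:ℝ)/3)^(n+1) * En a ≤ ((4:ℝ)/3)^(n+1+1) * En a := by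
            refine mul_le_mul_of_nonneg_right ?_ hEa0
            exact pow_le_pow_right₀ (by norm_num) (by omega)
          linarith
      · push_neg at hcase
        have hxa : a ≤ x := hx.1
        have hcont' : ContinuousOn Φ (Icc a x) := hΦcont.mono (Icc_subset_Icc le_rfl hx.2)
        have hmem : ((n:ℝ) / 4) ∈ Icc (Φ a) (Φ x) := by
          constructor
          · rw [hΦa]; positivity
          · exact hcase.le
        obtain ⟨x₀, hx₀, hΦx₀⟩ := intermediate_value_Icc hxa hcont' hmem
        have hx₀S : x₀ ∈ Icc a c := ⟨hx₀.1, hx₀.2.trans hx.2⟩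
        obtain ⟨hl, hr⟩ := ih x₀ hx₀S (le_of_eq hΦx₀)
        have hsm : (∫ s in x₀..x, k s) ≤ 1/4 := by
          rw [hΦdiff x₀ hx₀S x hx, hΦx₀]
          push_cast at hxΦ ⊢
          linarith
        have hpieceR := piece x₀ hx₀S x hx hx₀.2 hsm
        have hEx₀0 : 0 ≤ En x₀ := hEn0 x₀ hx₀S
        constructor
        · calc ((2:ℝ)/3)^(n+1+1) * En a = (2/3) * (((2:ℝ)/3)^(n+1) * En a) := by ring
            _ ≤ (2/3) * En x₀ := by
                refine mul_le_mul_of_nonneg_left hl (by norm_num)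
            _ ≤ En x := hpieceR.1
        · calc En x ≤ (4/3) * En x₀ := hpieceR.2
            _ ≤ (4/3) * (((4:ℝ)/3)^(n+1) * En a) := mul_le_mul_of_nonneg_left hr (by norm_num)
            _ = ((4:ℝ)/3)^(n+1+1) * En a := by ring
  ------------------------------------------------------------------
  -- Part 5: conversion to the Euclidean norm
  ------------------------------------------------------------------
  intro x hx
  obtain ⟨hl, hr⟩ := main N x hx (hΦcN x hx)
  have hxS := hx
  have hδEx := hδE x hxS
  have hδEa := hδE a haS
  have hEupx := hEup x hxS
  have hEupa := hEup a haS
  have hEn0x := hEn0 x hxS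
  have hEn0a := hEn0 a haS
  have hpow : ((3:ℝ)/2)^(N+1) * ((2:ℝ)/3)^(N+1) = 1 := by
    rw [← mul_pow]; norm_num
  have hpow43 : ((4:ℝ)/3)^(N+1) ≤ ((3:ℝ)/2)^(N+1) :=
    pow_le_pow_left₀ (by norm_num) (by norm_num) _
  have hpow32pos : (0:ℝ) < ((3:ℝ)/2)^(N+1) := by positivity
  have hβge : ((3:ℝ)/2)^(N+1) / δ ≤ β := le_max_left _ _
  set Sx : ℝ := u lam x 0 ^ 2 + u lam x 1 ^ 2 with hSxdef
  set Sa : ℝ := u lam a 0 ^ 2 + u lam a 1 ^ 2 with hSadef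
  have hSx' : Sx = u lam x 0 * u lam x 0 + u lam x 1 * u lam x 1 := by
    simp only [hSxdef]; ring
  have hSa' : Sa = u lam a 0 * u lam a 0 + u lam a 1 * u lam a 1 := by
    simp only [hSadef]; ring
  have hSx0 : 0 ≤ Sx := by
    rw [hSx']; exact add_nonneg (mul_self_nonneg _) (mul_self_nonneg _)
  have hSa0 : 0 ≤ Sa := by
    rw [hSa']; exact add_nonneg (mul_self_nonneg _) (mul_self_nonneg _)
  -- upper bound : Sx ≤ β * Sa
  have hup : Sx ≤ β * Sa := by
    have h1 : δ * Sx ≤ En x := by rw [hSx']; exact hδEx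
    have h2 : En a ≤ Sa := by rw [hSa']; exact hEupa
    have h3 : En x ≤ ((4:ℝ)/3)^(N+1) * Sa := by
      calc En x ≤ ((4:ℝ)/3)^(N+1) * En a := hr
        _ ≤ ((4:ℝ)/3)^(N+1) * Sa := mul_le_mul_of_nonneg_left h2 (by positivity)
    have h4 : Sx ≤ (((4:ℝ)/3)^(N+1) / δ) * Sa := by
      rw [div_mul_eq_mul_div, le_div_iff₀ hδ]
      calc Sx * δ = δ * Sx := mul_comm _ _
        _ ≤ En x := h1
        _ ≤ ((4:ℝ)/3)^(N+1) * Sa := h3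
    calc Sx ≤ (((4:ℝ)/3)^(N+1) / δ) * Sa := h4
      _ ≤ (((3:ℝ)/2)^(N+1) / δ) * Sa :=
          mul_le_mul_of_nonneg_right ((div_le_div_iff_of_pos_right hδ).mpr hpow43) hSa0
      _ ≤ β * Sa := mul_le_mul_of_nonneg_right hβge hSa0
  -- lower bound : Sa ≤ β * Sx
  have hlo : Sa ≤ β * Sx := by
    have h1 : δ * Sa ≤ En a := by rw [hSa']; exact hδEa
    have h2 : En x ≤ Sx := by rw [hSx']; exact hEupx
    have h3 : En a ≤ ((3:ℝ)/2)^(N+1) * En x := by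
      calc En a = ((3:ℝ)/2)^(N+1) * (((2:ℝ)/3)^(N+1) * En a) := by
            rw [← mul_assoc, hpow, one_mul]
        _ ≤ ((3:ℝ)/2)^(N+1) * En x := mul_le_mul_of_nonneg_left hl hpow32pos.le
    have h4 : Sa ≤ (((3:ℝ)/2)^(N+1) / δ) * Sx := by
      rw [div_mul_eq_mul_div, le_div_iff₀ hδ]
      calc Sa * δ = δ * Sa := mul_comm _ _
        _ ≤ En a := h1
        _ ≤ ((3:ℝ)/2)^(N+1) * En x := h3
        _ ≤ ((3:ℝ)/2)^(N+1) * Sx := mul_le_mul_of_nonneg_left h2 hpow32pos.le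
    calc Sa ≤ (((3:ℝ)/2)^(N+1) / δ) * Sx := h4
      _ ≤ β * Sx := mul_le_mul_of_nonneg_right hβge hSx0
  constructor
  · rw [inv_mul_le_iff₀ hCpos]
    have := Real.sqrt_le_sqrt hlo
    rw [Real.sqrt_mul hβ0] at this
    exact this
  · have := Real.sqrt_le_sqrt hup
    rw [Real.sqrt_mul hβ0] at this
    exact this
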